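/- arXiv:1911.04419 — 4 statements merged into one kernel-verified Lean document; each statement's English description precedes it below -/
import Mathlib

section
/- If T and S are A-bounded operators on H with TS = ST, then r_A(T + S) ≤ r_A(T) + r_A(S). -/
open Filter

variable {H : Type*} [NormedAddCommGroup H] [InnerProductSpace ℂ H] [CompleteSpace H]

/-- The seminorm induced by a positive operator `A`: `‖x‖_A = ⟨Ax,x⟩^{1/2}`. -/
noncomputable def anorm (A : H →L[ℂ] H) (x : H) : ℝ :=
  Real.sqrt ((inner ℂ (A x) x : ℂ).re)

/-- `T` is `A`-bounded: there is `c > 0` with `‖Tx‖_A ≤ c‖x‖_A` for all `x`. -/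
def ABounded (A T : H →L[ℂ] H) : Prop :=
  ∃ c > 0, ∀ x : H, anorm A (T x) ≤ c * anorm A x

/-- The `A`-operator seminorm `‖T‖_A = sup{‖Tx‖_A : ‖x‖_A = 1}`. -/
noncomputable def opAnorm (A T : H →L[ℂ] H) : ℝ :=
  sSup {c : ℝ | ∃ x : H, anorm A x = 1 ∧ c = anorm A (T x)}

/-- The `A`-spectral radius `r_A(T) = inf_{n ≥ 1} ‖Tⁿ‖_A^{1/n}`. -/
noncomputable def rA (A T : H →L[ℂ] H) : ℝ :=
  ⨅ n : ℕ+, opAnorm A (T ^ (n : ℕ)) ^ (((n : ℕ) : ℝ)⁻¹)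

/-- The `A`-numerical radius `ω_A(T) = sup{|⟨Tx,x⟩_A| : ‖x‖_A = 1}`. -/
noncomputable def wA (A T : H →L[ℂ] H) : ℝ :=
  sSup {c : ℝ | ∃ x : H, anorm A x = 1 ∧ c = ‖(inner ℂ (A (T x)) x : ℂ)‖}

set_option linter.unusedSectionVars false

lemma my_anorm_nonneg (A : H →L[ℂ] H) (x : H) : 0 ≤ anorm A x := Real.sqrt_nonneg _

lemma exists_sqrt (A : H →L[ℂ] H) (hA : A.IsPositive) :
    ∃ B : H →L[ℂ] H, IsSelfAdjoint B ∧ B * B = A := by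
  have h0 : (0:H →L[ℂ] H) ≤ A := (ContinuousLinearMap.nonneg_iff_isPositive A).mpr hA
  exact ⟨CFC.sqrt A, IsSelfAdjoint.of_nonneg (CFC.sqrt_nonneg A), CFC.sqrt_mul_sqrt_self A h0⟩

lemma anorm_eq {A B : H →L[ℂ] H} (hB : IsSelfAdjoint B) (hBA : B * B = A) (x : H) :
    anorm A x = ‖B x‖ := by
  have h1 : A x = B (B x) := by rw [← hBA]; rfl
  have h2 : (inner ℂ (B (B x)) x : ℂ) = inner ℂ (B x) (B x) := by
    nth_rewrite 1 [← hB.adjoint_eq]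
    exact ContinuousLinearMap.adjoint_inner_left B x (B x)
  rw [anorm, h1, h2]
  rw [show (inner ℂ (B x) (B x) : ℂ).re = ‖B x‖ ^ 2 from inner_self_eq_norm_sq (𝕜 := ℂ) (B x)]
  exact Real.sqrt_sq (norm_nonneg _)

section
variable {A B : H →L[ℂ] H}

lemma anorm_add_le (hN : ∀ x, anorm A x = ‖B x‖) (x y : H) :
    anorm A (x + y) ≤ anorm A x + anorm A y := by
  simp only [hN, map_add]; exact norm_add_le _ _

lemma anorm_smul (hN : ∀ x, anorm A x = ‖B x‖) (c : ℂ) (x : H) :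
    anorm A (c • x) = ‖c‖ * anorm A x := by
  simp only [hN, map_smul, norm_smul]

lemma anorm_nsmul (hN : ∀ x, anorm A x = ‖B x‖) (m : ℕ) (x : H) :
    anorm A (m • x) = m * anorm A x := by
  rw [← Nat.cast_smul_eq_nsmul ℂ m x, anorm_smul hN]
  simp

lemma anorm_sum_le (hN : ∀ x, anorm A x = ‖B x‖) {ι : Type*} (s : Finset ι) (f : ι → H) :
    anorm A (∑ i ∈ s, f i) ≤ ∑ i ∈ s, anorm A (f i) := by
  simp only [hN, map_sum]; exact norm_sum_le _ _

lemma exists_anorm_one (hN : ∀ x, anorm A x = ‖B x‖) (hBA : B * B = A) (hA0 : A ≠ 0) :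
    ∃ x : H, anorm A x = 1 := by
  have hB0 : B ≠ 0 := by
    rintro rfl; exact hA0 (by rw [← hBA, mul_zero])
  obtain ⟨x, hx⟩ : ∃ x, B x ≠ 0 := by
    by_contra h
    push_neg at h
    exact hB0 (by ext y; simpa using h y)
  refine ⟨((‖B x‖⁻¹ : ℝ) : ℂ) • x, ?_⟩
  rw [anorm_smul hN, hN]
  simp [norm_inv, inv_mul_cancel₀ (norm_ne_zero_iff.mpr hx)]

end

section
variable {A B : H →L[ℂ] H}

lemma opAnorm_bddAbove {T : H →L[ℂ] H} (hT : ABounded A T) :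
    BddAbove {c : ℝ | ∃ x : H, anorm A x = 1 ∧ c = anorm A (T x)} := by
  obtain ⟨c, hc, h⟩ := hT
  refine ⟨c, ?_⟩
  rintro _ ⟨x, hx, rfl⟩
  simpa [hx] using h x

lemma opAnorm_set_nonempty (hN : ∀ x, anorm A x = ‖B x‖) (hBA : B * B = A) (hA0 : A ≠ 0)
    (T : H →L[ℂ] H) :
    Set.Nonempty {c : ℝ | ∃ x : H, anorm A x = 1 ∧ c = anorm A (T x)} := by
  obtain ⟨x, hx⟩ := exists_anorm_one hN hBA hA0
  exact ⟨anorm A (T x), x, hx, rfl⟩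

lemma le_opAnorm {T : H →L[ℂ] H} (hT : ABounded A T) {x : H} (hx : anorm A x = 1) :
    anorm A (T x) ≤ opAnorm A T :=
  le_csSup (opAnorm_bddAbove hT) ⟨x, hx, rfl⟩

lemma opAnorm_le_of_forall (hN : ∀ x, anorm A x = ‖B x‖) (hBA : B * B = A) (hA0 : A ≠ 0)
    {T : H →L[ℂ] H} {c : ℝ} (h : ∀ x, anorm A x = 1 → anorm A (T x) ≤ c) :
    opAnorm A T ≤ c := by
  refine csSup_le (opAnorm_set_nonempty hN hBA hA0 T) ?_
  rintro _ ⟨x, hx, rfl⟩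
  exact h x hx

lemma opAnorm_nonneg (hN : ∀ x, anorm A x = ‖B x‖) (hBA : B * B = A) (hA0 : A ≠ 0)
    {T : H →L[ℂ] H} (hT : ABounded A T) : 0 ≤ opAnorm A T := by
  obtain ⟨x, hx⟩ := exists_anorm_one hN hBA hA0
  exact le_trans (my_anorm_nonneg A (T x)) (le_opAnorm hT hx)

/-- key: `‖Ty‖_A ≤ ‖T‖_A ‖y‖_A`. -/
lemma anorm_apply_le (hN : ∀ x, anorm A x = ‖B x‖) {T : H →L[ℂ] H} (hT : ABounded A T)
    (y : H) : anorm A (T y) ≤ opAnorm A T * anorm A y := by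
  rcases eq_or_ne (anorm A y) 0 with h0 | h0
  · obtain ⟨c, hc, h⟩ := hT
    have := h y
    rw [h0, mul_zero] at this
    have h1 : anorm A (T y) = 0 := le_antisymm this (my_anorm_nonneg _ _)
    rw [h1, h0, mul_zero]
  · have ht : 0 < anorm A y := lt_of_le_of_ne (my_anorm_nonneg _ _) (Ne.symm h0)
    set t := anorm A y with htdef
    have hu : anorm A (((t⁻¹ : ℝ) : ℂ) • y) = 1 := by
      rw [anorm_smul hN, Complex.norm_real, Real.norm_eq_abs,
        abs_of_nonneg (inv_nonneg.mpr ht.le), ← htdef, inv_mul_cancel₀ h0]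
    have h2 : anorm A (T (((t⁻¹ : ℝ) : ℂ) • y)) ≤ opAnorm A T := le_opAnorm hT hu
    rw [map_smul, anorm_smul hN] at h2
    simp only [Complex.norm_real, norm_inv, Real.norm_eq_abs,
      abs_of_nonneg ht.le] at h2
    calc anorm A (T y) = t * (t⁻¹ * anorm A (T y)) := by
          field_simp
      _ ≤ t * opAnorm A T := by
          exact mul_le_mul_of_nonneg_left (by simpa using h2) ht.le
      _ = opAnorm A T * t := mul_comm _ _

lemma ABounded.mul {T S : H →L[ℂ] H} (hT : ABounded A T) (hS : ABounded A S) :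
    ABounded A (T * S) := by
  obtain ⟨c, hc, h⟩ := hT
  obtain ⟨d, hd, h'⟩ := hS
  refine ⟨c * d, mul_pos hc hd, fun x => ?_⟩
  calc anorm A ((T * S) x) = anorm A (T (S x)) := rfl
    _ ≤ c * anorm A (S x) := h _
    _ ≤ c * (d * anorm A x) := mul_le_mul_of_nonneg_left (h' x) hc.le
    _ = c * d * anorm A x := (mul_assoc _ _ _).symm

lemma ABounded.one : ABounded A (1 : H →L[ℂ] H) := ⟨1, one_pos, fun x => by simp⟩

lemma ABounded.pow {T : H →L[ℂ] H} (hT : ABounded A T) (n : ℕ) : ABounded A (T ^ n) := by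
  induction n with
  | zero => simpa using ABounded.one
  | succ k ih => rw [pow_succ]; exact ih.mul hT

lemma opAnorm_mul_le (hN : ∀ x, anorm A x = ‖B x‖) (hBA : B * B = A) (hA0 : A ≠ 0)
    {T S : H →L[ℂ] H} (hT : ABounded A T) (hS : ABounded A S) :
    opAnorm A (T * S) ≤ opAnorm A T * opAnorm A S := by
  refine opAnorm_le_of_forall hN hBA hA0 (fun x hx => ?_)
  calc anorm A ((T * S) x) = anorm A (T (S x)) := rfl
    _ ≤ opAnorm A T * anorm A (S x) := anorm_apply_le hN hT _
    _ ≤ opAnorm A T * (opAnorm A S * anorm A x) :=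
        mul_le_mul_of_nonneg_left (anorm_apply_le hN hS x) (opAnorm_nonneg hN hBA hA0 hT)
    _ = opAnorm A T * opAnorm A S := by rw [hx, mul_one]

lemma opAnorm_pow_le (hN : ∀ x, anorm A x = ‖B x‖) (hBA : B * B = A) (hA0 : A ≠ 0)
    {T : H →L[ℂ] H} (hT : ABounded A T) (n : ℕ) :
    opAnorm A (T ^ n) ≤ opAnorm A T ^ n := by
  induction n with
  | zero =>
      simp only [pow_zero]
      refine opAnorm_le_of_forall hN hBA hA0 (fun x hx => ?_)
      simpa using hx.le
  | succ k ih =>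
      rw [pow_succ, pow_succ]
      calc opAnorm A (T ^ k * T) ≤ opAnorm A (T ^ k) * opAnorm A T :=
            opAnorm_mul_le hN hBA hA0 (hT.pow k) hT
        _ ≤ opAnorm A T ^ k * opAnorm A T :=
            mul_le_mul_of_nonneg_right ih (opAnorm_nonneg hN hBA hA0 hT)

end

section
variable {A B : H →L[ℂ] H}

lemma rA_nonneg (hN : ∀ x, anorm A x = ‖B x‖) (hBA : B * B = A) (hA0 : A ≠ 0)
    {T : H →L[ℂ] H} (hT : ABounded A T) : 0 ≤ rA A T :=
  le_ciInf fun n => Real.rpow_nonneg (opAnorm_nonneg hN hBA hA0 (hT.pow _)) _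

lemma rA_le (hN : ∀ x, anorm A x = ‖B x‖) (hBA : B * B = A) (hA0 : A ≠ 0)
    {T : H →L[ℂ] H} (hT : ABounded A T) (n : ℕ+) :
    rA A T ≤ opAnorm A (T ^ (n : ℕ)) ^ (((n : ℕ) : ℝ)⁻¹) := by
  refine ciInf_le ⟨0, ?_⟩ n
  rintro _ ⟨m, rfl⟩
  exact Real.rpow_nonneg (opAnorm_nonneg hN hBA hA0 (hT.pow _)) _

lemma growth (hN : ∀ x, anorm A x = ‖B x‖) (hBA : B * B = A) (hA0 : A ≠ 0)
    {T : H →L[ℂ] H} (hT : ABounded A T) {ε : ℝ} (hε : 0 < ε) :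
    ∃ M : ℝ, 1 ≤ M ∧ ∀ k : ℕ, opAnorm A (T ^ k) ≤ M * (rA A T + ε) ^ k := by
  have hr : 0 ≤ rA A T := rA_nonneg hN hBA hA0 hT
  set b := rA A T + ε with hbdef
  have hb : 0 < b := by positivity
  obtain ⟨n₀, hn₀⟩ : ∃ n : ℕ+, opAnorm A (T ^ (n : ℕ)) ^ (((n : ℕ) : ℝ)⁻¹) < b :=
    exists_lt_of_ciInf_lt (by rw [rA] at *; linarith)
  have hne : (n₀ : ℕ) ≠ 0 := n₀.pos.ne'
  have hop0 : 0 ≤ opAnorm A (T ^ (n₀ : ℕ)) := opAnorm_nonneg hN hBA hA0 (hT.pow _)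
  have key : opAnorm A (T ^ (n₀ : ℕ)) ≤ b ^ (n₀ : ℕ) := by
    have h1 : (opAnorm A (T ^ (n₀ : ℕ)) ^ (((n₀ : ℕ) : ℝ)⁻¹)) ^ (n₀ : ℕ)
        ≤ b ^ (n₀ : ℕ) := pow_le_pow_left₀ (Real.rpow_nonneg hop0 _) hn₀.le _
    rwa [Real.rpow_inv_natCast_pow hop0 hne] at h1
  set c := opAnorm A T with hcdef
  have hc : 0 ≤ c := opAnorm_nonneg hN hBA hA0 hT
  set d := max 1 (c / b) with hddef
  have hd1 : (1:ℝ) ≤ d := le_max_left _ _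
  have hd0 : (0:ℝ) ≤ d := le_trans zero_le_one hd1
  have hcdb : c ≤ d * b := (div_le_iff₀ hb).mp (le_max_right _ _)
  refine ⟨d ^ (n₀ : ℕ), one_le_pow₀ hd1, fun k => ?_⟩
  have aux : ∀ q t : ℕ, opAnorm A (T ^ (q * (n₀:ℕ) + t))
      ≤ opAnorm A (T ^ (n₀:ℕ)) ^ q * c ^ t := by
    intro q t
    induction q with
    | zero => simpa using opAnorm_pow_le hN hBA hA0 hT t
    | succ p ih =>
        have he : (p + 1) * (n₀:ℕ) + t = (n₀:ℕ) + (p * (n₀:ℕ) + t) := by ring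
        rw [he, pow_add]
        calc opAnorm A (T ^ (n₀:ℕ) * T ^ (p * (n₀:ℕ) + t))
            ≤ opAnorm A (T ^ (n₀:ℕ)) * opAnorm A (T ^ (p * (n₀:ℕ) + t)) :=
              opAnorm_mul_le hN hBA hA0 (hT.pow _) (hT.pow _)
          _ ≤ opAnorm A (T ^ (n₀:ℕ)) * (opAnorm A (T ^ (n₀:ℕ)) ^ p * c ^ t) :=
              mul_le_mul_of_nonneg_left ih hop0
          _ = opAnorm A (T ^ (n₀:ℕ)) ^ (p + 1) * c ^ t := by ring
  obtain ⟨q, t, ht, rfl⟩ : ∃ q t, t < (n₀:ℕ) ∧ q * (n₀:ℕ) + t = k :=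
    ⟨k / (n₀:ℕ), k % (n₀:ℕ), Nat.mod_lt _ n₀.pos, Nat.div_add_mod' k (n₀:ℕ)⟩
  calc opAnorm A (T ^ (q * (n₀:ℕ) + t)) ≤ opAnorm A (T ^ (n₀:ℕ)) ^ q * c ^ t := aux q t
    _ ≤ (b ^ (n₀:ℕ)) ^ q * c ^ t :=
        mul_le_mul_of_nonneg_right (pow_le_pow_left₀ hop0 key q) (pow_nonneg hc t)
    _ ≤ (b ^ (n₀:ℕ)) ^ q * (d * b) ^ t :=
        mul_le_mul_of_nonneg_left (pow_le_pow_left₀ hc hcdb t) (by positivity)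
    _ = d ^ t * b ^ (q * (n₀:ℕ) + t) := by
        rw [← pow_mul, pow_add, mul_pow, mul_comm (n₀:ℕ) q]; ring
    _ ≤ d ^ (n₀:ℕ) * b ^ (q * (n₀:ℕ) + t) :=
        mul_le_mul_of_nonneg_right (pow_le_pow_right₀ hd1 ht.le) (by positivity)

end

theorem stmt_2 (A T S : H →L[ℂ] H) (hA : A.IsPositive) (hA0 : A ≠ 0)
    (hT : ABounded A T) (hS : ABounded A S) (hcomm : T * S = S * T) :
    rA A (T + S) ≤ rA A T + rA A S := by

  obtain ⟨B, hBsa, hBA⟩ := exists_sqrt A hA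
  have hN : ∀ x, anorm A x = ‖B x‖ := anorm_eq hBsa hBA
  have hTS : ABounded A (T + S) := by
    obtain ⟨c, hc, h⟩ := hT
    obtain ⟨d, hd, h'⟩ := hS
    refine ⟨c + d, by positivity, fun x => ?_⟩
    calc anorm A ((T + S) x) = anorm A (T x + S x) := rfl
      _ ≤ anorm A (T x) + anorm A (S x) := anorm_add_le hN _ _
      _ ≤ c * anorm A x + d * anorm A x := add_le_add (h x) (h' x)
      _ = (c + d) * anorm A x := by ring
  refine le_of_forall_pos_le_add (fun ε hε => ?_)
  have hε2 : 0 < ε / 2 := by positivity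
  obtain ⟨M₁, hM₁, hgT⟩ := growth hN hBA hA0 hT hε2
  obtain ⟨M₂, hM₂, hgS⟩ := growth hN hBA hA0 hS hε2
  have hr : 0 ≤ rA A T := rA_nonneg hN hBA hA0 hT
  have hs : 0 ≤ rA A S := rA_nonneg hN hBA hA0 hS
  set b₁ := rA A T + ε / 2 with hb₁def
  set b₂ := rA A S + ε / 2 with hb₂def
  have hb₁ : 0 < b₁ := by positivity
  have hb₂ : 0 < b₂ := by positivity
  set C := b₁ + b₂ with hCdef
  have hC0 : 0 < C := by positivity
  set M := M₁ * M₂ with hMdef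
  have hM : 1 ≤ M := by nlinarith
  have hM0 : 0 < M := lt_of_lt_of_le one_pos hM
  have main : ∀ n : ℕ, opAnorm A ((T + S) ^ n) ≤ M * C ^ n := by
    intro n
    refine opAnorm_le_of_forall hN hBA hA0 (fun x hx => ?_)
    have hcm : Commute T S := hcomm
    have key : ∀ k ∈ Finset.range (n + 1),
        anorm A ((T ^ k * S ^ (n - k) * (n.choose k : H →L[ℂ] H)) x)
          ≤ M * (b₁ ^ k * b₂ ^ (n - k) * (n.choose k : ℝ)) := by
      intro k _
      have happ : (T ^ k * S ^ (n - k) * (n.choose k : H →L[ℂ] H)) x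
          = (n.choose k) • ((T ^ k * S ^ (n - k)) x) := by
        rw [ContinuousLinearMap.mul_apply, ContinuousLinearMap.natCast_apply, map_nsmul]
      have h1 : anorm A ((T ^ k * S ^ (n - k)) x)
          ≤ opAnorm A (T ^ k) * opAnorm A (S ^ (n - k)) := by
        calc anorm A ((T ^ k * S ^ (n - k)) x) = anorm A ((T ^ k) ((S ^ (n - k)) x)) := rfl
          _ ≤ opAnorm A (T ^ k) * anorm A ((S ^ (n - k)) x) :=
              anorm_apply_le hN (hT.pow k) _
          _ ≤ opAnorm A (T ^ k) * (opAnorm A (S ^ (n - k)) * anorm A x) :=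
              mul_le_mul_of_nonneg_left (anorm_apply_le hN (hS.pow _) x)
                (opAnorm_nonneg hN hBA hA0 (hT.pow k))
          _ = opAnorm A (T ^ k) * opAnorm A (S ^ (n - k)) := by rw [hx, mul_one]
      have h2 : opAnorm A (T ^ k) * opAnorm A (S ^ (n - k))
          ≤ (M₁ * b₁ ^ k) * (M₂ * b₂ ^ (n - k)) :=
        mul_le_mul (hgT k) (hgS (n - k)) (opAnorm_nonneg hN hBA hA0 (hS.pow _))
          (by positivity)
      calc anorm A ((T ^ k * S ^ (n - k) * (n.choose k : H →L[ℂ] H)) x)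
          = (n.choose k : ℝ) * anorm A ((T ^ k * S ^ (n - k)) x) := by
            rw [happ, anorm_nsmul hN]
        _ ≤ (n.choose k : ℝ) * ((M₁ * b₁ ^ k) * (M₂ * b₂ ^ (n - k))) :=
            mul_le_mul_of_nonneg_left (h1.trans h2) (Nat.cast_nonneg _)
        _ = M * (b₁ ^ k * b₂ ^ (n - k) * (n.choose k : ℝ)) := by rw [hMdef]; ring
    calc anorm A (((T + S) ^ n) x)
        = anorm A ((∑ k ∈ Finset.range (n + 1),
            T ^ k * S ^ (n - k) * (n.choose k : H →L[ℂ] H)) x) := by rw [hcm.add_pow]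
      _ = anorm A (∑ k ∈ Finset.range (n + 1),
            (T ^ k * S ^ (n - k) * (n.choose k : H →L[ℂ] H)) x) := by
          rw [ContinuousLinearMap.sum_apply]
      _ ≤ ∑ k ∈ Finset.range (n + 1),
            anorm A ((T ^ k * S ^ (n - k) * (n.choose k : H →L[ℂ] H)) x) :=
          anorm_sum_le hN _ _
      _ ≤ ∑ k ∈ Finset.range (n + 1), M * (b₁ ^ k * b₂ ^ (n - k) * (n.choose k : ℝ)) :=
          Finset.sum_le_sum key
      _ = M * C ^ n := by rw [← Finset.mul_sum, ← add_pow]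
  have step : ∀ n : ℕ+, rA A (T + S) ≤ M ^ (((n : ℕ) : ℝ)⁻¹) * C := by
    intro n
    refine (rA_le hN hBA hA0 hTS n).trans ?_
    have h0 : 0 ≤ opAnorm A ((T + S) ^ (n : ℕ)) := opAnorm_nonneg hN hBA hA0 (hTS.pow _)
    have h1 : opAnorm A ((T + S) ^ (n : ℕ)) ^ (((n : ℕ) : ℝ)⁻¹)
        ≤ (M * C ^ (n : ℕ)) ^ (((n : ℕ) : ℝ)⁻¹) :=
      Real.rpow_le_rpow h0 (main n) (by positivity)
    rwa [Real.mul_rpow hM0.le (by positivity),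
      Real.pow_rpow_inv_natCast hC0.le n.pos.ne'] at h1
  have hlim : Tendsto (fun n : ℕ => M ^ (((n : ℕ) : ℝ)⁻¹) * C) atTop (nhds (1 * C)) := by
    have h2 : ContinuousAt (fun x : ℝ => M ^ x) 0 := Real.continuousAt_const_rpow hM0.ne'
    have h3 := h2.tendsto.comp tendsto_inv_atTop_nhds_zero_nat
    rw [Real.rpow_zero] at h3
    exact h3.mul tendsto_const_nhds
  have final : rA A (T + S) ≤ 1 * C :=
    ge_of_tendsto hlim (eventually_atTop.mpr ⟨1, fun n hn => step ⟨n, hn⟩⟩)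
  rw [one_mul] at final
  calc rA A (T + S) ≤ C := final
    _ = rA A T + rA A S + ε := by rw [hCdef, hb₁def, hb₂def]; ring
end

section
/- If T is a bounded operator on H such that T(N(A)) is not contained in N(A) (where N(A) is the kernel of A), then the A-numerical range W_A(T) = {⟨Tx,x⟩_A : ‖x‖_A = 1} equals all of ℂ; in particular the A-numerical radius ω_A(T) is infinite. -/
open Filter

variable {H : Type*} [NormedAddCommGroup H] [InnerProductSpace ℂ H] [CompleteSpace H]

lemma pos_inner_zero (A : H →L[ℂ] H) (hA : A.IsPositive) (v : H)
    (h : (inner ℂ (A v) v : ℂ).re = 0) : A v = 0 := by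
  have hsym : (A : H →ₗ[ℂ] H).IsSymmetric :=
    ContinuousLinearMap.isSelfAdjoint_iff_isSymmetric.mp hA.isSelfAdjoint
  have key : ∀ u : H, (inner ℂ (A v) u : ℂ).re = 0 := by
    intro u
    set b := (inner ℂ (A v) u : ℂ).re with hb
    set C := (inner ℂ (A u) u : ℂ).re with hC
    have hC0 : 0 ≤ C := hA.2 u
    have hall : ∀ t : ℝ, 0 ≤ 2 * t * b + t ^ 2 * C := by
      intro t
      have hpos := hA.2 (v + (t : ℂ) • u)
      rw [ContinuousLinearMap.reApplyInnerSelf_apply] at hpos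
      have huv : (inner ℂ (A u) v : ℂ) = starRingEnd ℂ (inner ℂ (A v) u) := by
        simpa using (hsym u v).trans (inner_conj_symm u (A v)).symm
      have hexp : (inner ℂ (A (v + (t:ℂ) • u)) (v + (t:ℂ) • u) : ℂ) =
          inner ℂ (A v) v + (t:ℂ) * inner ℂ (A v) u + (t:ℂ) * starRingEnd ℂ (inner ℂ (A v) u)
            + (t:ℂ) * (t:ℂ) * inner ℂ (A u) u := by
        rw [map_add, map_smul, inner_add_left, inner_add_right, inner_add_right,
          inner_smul_left, inner_smul_right, inner_smul_left, inner_smul_right, huv]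
        simp [Complex.conj_ofReal]
        ring
      rw [hexp] at hpos
      simp only [RCLike.re_to_complex, Complex.add_re, Complex.mul_re, Complex.ofReal_re,
        Complex.ofReal_im, Complex.conj_re, Complex.conj_im, Complex.mul_im, h] at hpos
      nlinarith [hpos, sq t]
    have hCpos : (0:ℝ) < C + 1 := by linarith
    have h1 := hall (-b / (C + 1))
    have hble : b ^ 2 ≤ 0 := by
      have h2 : 0 ≤ (2 * (-b / (C + 1)) * b + (-b / (C + 1)) ^ 2 * C) * (C + 1) ^ 2 :=
        mul_nonneg h1 (by positivity)
      have h3 : (2 * (-b / (C + 1)) * b + (-b / (C + 1)) ^ 2 * C) * (C + 1) ^ 2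
          = -(b ^ 2) * (C + 2) := by field_simp; ring
      nlinarith [h2, h3, hC0]
    have : b ^ 2 = 0 := le_antisymm hble (sq_nonneg b)
    exact pow_eq_zero_iff (by norm_num) |>.mp this
  have hz : ∀ u : H, (inner ℂ (A v) u : ℂ) = 0 := by
    intro u
    have h1 := key u
    have h2 := key (Complex.I • u)
    rw [inner_smul_right] at h2
    simp [Complex.mul_re] at h2
    exact Complex.ext h1 h2
  have := hz (A v)
  rwa [inner_self_eq_zero] at this

theorem stmt_4 (A T : H →L[ℂ] H) (hA : A.IsPositive) (hA0 : A ≠ 0)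
    (hker : ∃ x : H, A x = 0 ∧ A (T x) ≠ 0) :
    {z : ℂ | ∃ x : H, anorm A x = 1 ∧ z = (inner ℂ (A (T x)) x : ℂ)} = Set.univ ∧
      ¬ BddAbove {c : ℝ | ∃ x : H, anorm A x = 1 ∧ c = ‖(inner ℂ (A (T x)) x : ℂ)‖} := by
  obtain ⟨x₀, hx0, hw⟩ := hker
  have hsym : (A : H →ₗ[ℂ] H).IsSymmetric :=
    ContinuousLinearMap.isSelfAdjoint_iff_isSymmetric.mp hA.isSelfAdjoint
  have hxAx0 : ∀ y : H, (inner ℂ (A y) x₀ : ℂ) = 0 := by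
    intro y
    have h1 : (inner ℂ (A y) x₀ : ℂ) = inner ℂ y (A x₀) := by simpa using hsym y x₀
    rw [h1, hx0, inner_zero_right]
  have hrepos : 0 < (inner ℂ (A (T x₀)) (T x₀) : ℂ).re := by
    rcases lt_or_eq_of_le (hA.2 (T x₀)) with h | h
    · exact h
    · exact absurd (pos_inner_zero A hA (T x₀) h.symm) hw
  have him : (inner ℂ (A (T x₀)) (T x₀) : ℂ).im = 0 := by
    have h1 : (inner ℂ (A (T x₀)) (T x₀) : ℂ) = starRingEnd ℂ (inner ℂ (A (T x₀)) (T x₀)) :=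
      (by simpa using hsym (T x₀) (T x₀) :
        (inner ℂ (A (T x₀)) (T x₀) : ℂ) = inner ℂ (T x₀) (A (T x₀))).trans
        (inner_conj_symm (T x₀) (A (T x₀))).symm
    exact Complex.conj_eq_iff_im.mp h1.symm
  obtain ⟨r, hr, hAss⟩ : ∃ r : ℝ, 0 < r ∧
      (inner ℂ (A (T x₀)) (T x₀) : ℂ) = ((r ^ 2 : ℝ) : ℂ) := by
    refine ⟨Real.sqrt ((inner ℂ (A (T x₀)) (T x₀) : ℂ).re), Real.sqrt_pos.mpr hrepos, ?_⟩
    apply Complex.ext <;> simp [Real.sq_sqrt hrepos.le, him]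
  have hrne : (r : ℂ) ≠ 0 := by exact_mod_cast hr.ne'
  obtain ⟨u, hAuu, hAsu⟩ : ∃ u : H, (inner ℂ (A u) u : ℂ) = 1 ∧
      (inner ℂ (A (T x₀)) u : ℂ) = (r : ℂ) := by
    refine ⟨((r : ℂ)⁻¹) • (T x₀), ?_, ?_⟩
    · rw [map_smul, inner_smul_left, inner_smul_right, map_inv₀, Complex.conj_ofReal, hAss]
      push_cast
      field_simp
    · rw [inner_smul_right, hAss]
      push_cast
      field_simp
  have hnorm : ∀ lam : ℂ, (inner ℂ (A (u + lam • x₀)) (u + lam • x₀) : ℂ) = 1 := by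
    intro lam
    rw [map_add, map_smul, hx0, smul_zero, add_zero, inner_add_right, inner_smul_right,
      hxAx0 u, mul_zero, add_zero, hAuu]
  have hexp : ∀ lam : ℂ, (inner ℂ (A (T (u + lam • x₀))) (u + lam • x₀) : ℂ)
      = inner ℂ (A (T u)) u + starRingEnd ℂ lam * (r : ℂ) := by
    intro lam
    rw [map_add, map_smul, map_add, map_smul, inner_add_left, inner_add_right, inner_add_right,
      inner_smul_right, inner_smul_left, inner_smul_right, inner_smul_left,
      hxAx0 (T u), hxAx0 (T x₀), hAsu]
    ring
  have key : ∀ z : ℂ, ∃ x : H, anorm A x = 1 ∧ (inner ℂ (A (T x)) x : ℂ) = z := by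
    intro z
    refine ⟨u + (starRingEnd ℂ ((z - inner ℂ (A (T u)) u) / (r : ℂ))) • x₀, ?_, ?_⟩
    · unfold anorm
      rw [hnorm]
      simp
    · rw [hexp, Complex.conj_conj]
      field_simp
      ring
  constructor
  · ext z
    simp only [Set.mem_setOf_eq, Set.mem_univ, iff_true]
    obtain ⟨x, h1, h2⟩ := key z
    exact ⟨x, h1, h2.symm⟩
  · rintro ⟨c, hc⟩
    obtain ⟨x, h1, h2⟩ := key ((|c| + 1 : ℝ) : ℂ)
    have hmem : |c| + 1 ∈ {c : ℝ | ∃ x : H, anorm A x = 1 ∧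
        c = ‖(inner ℂ (A (T x)) x : ℂ)‖} := by
      refine ⟨x, h1, ?_⟩
      rw [h2, Complex.norm_real, Real.norm_eq_abs]
      exact (abs_of_nonneg (by positivity)).symm
    have h3 := hc hmem
    have h4 := le_abs_self c
    linarith
end

section
/- If T ∈ B_A(H) is A-hyponormal, i.e., ‖Tx‖_A ≥ ‖T^♯ x‖_A for all x ∈ H, then T is A-paranormal, i.e., ‖Tx‖_A² ≤ ‖T²x‖_A for all x with ‖x‖_A = 1. -/
open Filter

variable {H : Type*} [NormedAddCommGroup H] [InnerProductSpace ℂ H] [CompleteSpace H]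

/-- Semi-inner-product core induced by a positive operator. -/
noncomputable def ACore (A : H →L[ℂ] H) (hA : A.IsPositive) :
    PreInnerProductSpace.Core ℂ H where
  inner x y := (inner ℂ (A x) y : ℂ)
  conj_inner_symm x y := by
    have h : A.adjoint = A := hA.isSelfAdjoint
    calc (starRingEnd ℂ) (inner ℂ (A y) x) = inner ℂ x (A y) := by rw [inner_conj_symm]
    _ = inner ℂ (A.adjoint x) y := by rw [ContinuousLinearMap.adjoint_inner_left]
    _ = inner ℂ (A x) y := by rw [h]
  re_inner_nonneg x := hA.re_inner_nonneg_left x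
  add_left x y z := by simp [inner_add_left]
  smul_left x y r := by simp [inner_smul_left, mul_comm]

lemma anorm_nonneg_re (A : H →L[ℂ] H) (hA : A.IsPositive) (x : H) :
    anorm A x ^ 2 = (inner ℂ (A x) x : ℂ).re :=
  Real.sq_sqrt (hA.re_inner_nonneg_left x)

/-- Cauchy–Schwarz for the `A`-semi-inner product. -/
lemma a_cauchy_schwarz (A : H →L[ℂ] H) (hA : A.IsPositive) (x y : H) :
    ‖(inner ℂ (A x) y : ℂ)‖ ≤ anorm A x * anorm A y := by
  have h := @InnerProductSpace.Core.inner_mul_inner_self_le ℂ H _ _ _ (ACore A hA) x y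
  have hsymm : ‖(inner ℂ (A y) x : ℂ)‖ = ‖(inner ℂ (A x) y : ℂ)‖ := by
    rw [← inner_conj_symm (A y) x]
    have h2 : (inner ℂ x (A y) : ℂ) = inner ℂ (A x) y := by
      rw [← (show A.adjoint = A from hA.isSelfAdjoint), ContinuousLinearMap.adjoint_inner_left,
        (show A.adjoint = A from hA.isSelfAdjoint)]
    rw [h2]
    exact RCLike.norm_conj _
  have h' : ‖(inner ℂ (A x) y : ℂ)‖ ^ 2 ≤ (inner ℂ (A x) x : ℂ).re * (inner ℂ (A y) y : ℂ).re := by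
    calc ‖(inner ℂ (A x) y : ℂ)‖ ^ 2 = ‖(inner ℂ (A x) y : ℂ)‖ * ‖(inner ℂ (A y) x : ℂ)‖ := by
          rw [hsymm]; ring
    _ ≤ (inner ℂ (A x) x : ℂ).re * (inner ℂ (A y) y : ℂ).re := h
  have hx := hA.re_inner_nonneg_left x
  have hy := hA.re_inner_nonneg_left y
  have : ‖(inner ℂ (A x) y : ℂ)‖ ^ 2 ≤ (anorm A x * anorm A y) ^ 2 := by
    rw [mul_pow, anorm_nonneg_re A hA, anorm_nonneg_re A hA]
    simpa using h'
  have hprod : 0 ≤ anorm A x * anorm A y :=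
    mul_nonneg (Real.sqrt_nonneg _) (Real.sqrt_nonneg _)
  nlinarith [norm_nonneg (inner ℂ (A x) y : ℂ)]

theorem stmt_16 (A T S : H →L[ℂ] H) (hA : A.IsPositive) (hA0 : A ≠ 0)
    (hadj : ∀ x y : H, (inner ℂ (A (T x)) y : ℂ) = (inner ℂ (A x) (S y) : ℂ))
    (hhyp : ∀ x : H, anorm A (S x) ≤ anorm A (T x)) :
    ∀ x : H, anorm A x = 1 → (anorm A (T x)) ^ 2 ≤ anorm A ((T ^ 2) x) := by
  intro x hx
  have h1 : (anorm A (T x)) ^ 2 = (inner ℂ (A (T x)) (T x) : ℂ).re :=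
    anorm_nonneg_re A hA (T x)
  have h2 : (inner ℂ (A (T x)) (T x) : ℂ) = inner ℂ (A x) (S (T x)) := hadj x (T x)
  have h3 : (inner ℂ (A x) (S (T x)) : ℂ).re ≤ ‖(inner ℂ (A x) (S (T x)) : ℂ)‖ :=
    Complex.re_le_norm _
  have h4 := a_cauchy_schwarz A hA x (S (T x))
  have h5 : anorm A (S (T x)) ≤ anorm A (T (T x)) := hhyp (T x)
  have h6 : (T ^ 2) x = T (T x) := by
    rw [pow_two]; rfl
  rw [h1, h2, h6]
  calc (inner ℂ (A x) (S (T x)) : ℂ).re ≤ ‖(inner ℂ (A x) (S (T x)) : ℂ)‖ := h3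
  _ ≤ anorm A x * anorm A (S (T x)) := h4
  _ = anorm A (S (T x)) := by rw [hx, one_mul]
  _ ≤ anorm A (T (T x)) := h5
end

section
/- If T is a bounded operator on H that is A-self-adjoint (AT = T*A), then T is A-paranormal: ‖Tx‖_A² ≤ ‖T²x‖_A for every x with ‖x‖_A = 1. -/
open Filter

variable {H : Type*} [NormedAddCommGroup H] [InnerProductSpace ℂ H] [CompleteSpace H]

/-- The pre-inner-product space core induced by a positive operator. -/
noncomputable def preCoreA (A : H →L[ℂ] H) (hA : A.IsPositive) :
    PreInnerProductSpace.Core ℂ H where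
  inner x y := inner ℂ (A x) y
  conj_inner_symm x y := by
    rw [inner_conj_symm, ← ContinuousLinearMap.adjoint_inner_left,
      hA.isSelfAdjoint.adjoint_eq]
  re_inner_nonneg x := by
    simpa using (Complex.nonneg_iff.mp (hA.inner_nonneg_left x)).1
  add_left x y z := by simp [inner_add_left]
  smul_left x y r := by simp [inner_smul_left, mul_comm]

/-- Cauchy–Schwarz for the semi-inner product induced by a positive operator. -/
lemma csA (A : H →L[ℂ] H) (hA : A.IsPositive) (x y : H) :
    ‖(inner ℂ (A x) y : ℂ)‖ ^ 2 ≤ (inner ℂ (A x) x : ℂ).re * (inner ℂ (A y) y : ℂ).re := by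
  have h : ‖(inner ℂ (A x) y : ℂ)‖ * ‖(inner ℂ (A y) x : ℂ)‖
      ≤ (inner ℂ (A x) x : ℂ).re * (inner ℂ (A y) y : ℂ).re :=
    @InnerProductSpace.Core.inner_mul_inner_self_le ℂ H _ _ _ (preCoreA A hA) x y
  have hsymm : ‖(inner ℂ (A y) x : ℂ)‖ = ‖(inner ℂ (A x) y : ℂ)‖ := by
    rw [← inner_conj_symm, ← ContinuousLinearMap.adjoint_inner_left,
      hA.isSelfAdjoint.adjoint_eq, RCLike.norm_conj]
  rw [hsymm] at h
  simpa [sq] using h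

theorem stmt_18 (A T : H →L[ℂ] H) (hA : A.IsPositive) (hA0 : A ≠ 0)
    (hsa : A ∘L T = (ContinuousLinearMap.adjoint T) ∘L A) :
    ∀ x : H, anorm A x = 1 → (anorm A (T x)) ^ 2 ≤ anorm A ((T ^ 2) x) := by
  intro x hx
  have hATx : A (T x) = (ContinuousLinearMap.adjoint T) (A x) :=
    congrFun (congrArg DFunLike.coe hsa) x
  have hT2 : (T ^ 2) x = T (T x) := by
    simp [pow_two, ContinuousLinearMap.mul_apply]
  have hnn : ∀ y : H, 0 ≤ (inner ℂ (A y) y : ℂ).re := fun y => by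
    simpa using (Complex.nonneg_iff.mp (hA.inner_nonneg_left y)).1
  have hx1 : (inner ℂ (A x) x : ℂ).re = 1 := by
    have := hx
    unfold anorm at this
    nlinarith [Real.sq_sqrt (hnn x), Real.sqrt_nonneg ((inner ℂ (A x) x : ℂ).re)]
  -- ‖Tx‖_A² = re ⟨A Tx, Tx⟩ = re ⟨A x, T² x⟩
  have key : (anorm A (T x)) ^ 2 = (inner ℂ (A x) ((T ^ 2) x) : ℂ).re := by
    unfold anorm
    rw [Real.sq_sqrt (hnn (T x)), hATx, ContinuousLinearMap.adjoint_inner_left, hT2]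
  rw [key]
  have h1 : (inner ℂ (A x) ((T ^ 2) x) : ℂ).re ≤ ‖(inner ℂ (A x) ((T ^ 2) x) : ℂ)‖ :=
    Complex.re_le_norm _
  have h2 : ‖(inner ℂ (A x) ((T ^ 2) x) : ℂ)‖ ≤ anorm A ((T ^ 2) x) := by
    have hcs := csA A hA x ((T ^ 2) x)
    rw [hx1, one_mul] at hcs
    unfold anorm
    rw [show ‖(inner ℂ (A x) ((T ^ 2) x) : ℂ)‖
        = Real.sqrt (‖(inner ℂ (A x) ((T ^ 2) x) : ℂ)‖ ^ 2) by
      rw [Real.sqrt_sq (norm_nonneg _)]]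
    exact Real.sqrt_le_sqrt hcs
  linarith
end
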